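/- For every t ≥ 0, the total ionic content of the electrolyte is conserved: ∫_0^L c_e(x,t) dx = L · c_I. -/

import Mathlib

open Real MeasureTheory

/-- For every `t ≥ 0`, the total ionic content of the electrolyte is
conserved: `∫_0^L c_e(x,t) dx = L · c_I`. -/
theorem stmt_5 (L D β cI : ℝ) (hL : 0 < L) (hD : 0 < D)
    (ce : ℝ × ℝ → ℝ)
    (hce : ∀ x t : ℝ, ce (x, t) =
      cI + β * (L / 2 - x) -
        4 * β * L *
          ∑' k : ℕ, (1 / ((2 * (k : ℝ) + 1) ^ 2 * Real.pi ^ 2)) *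
            Real.cos ((2 * (k : ℝ) + 1) * Real.pi * x / L) *
            Real.exp (-(((2 * (k : ℝ) + 1) * Real.pi / L) ^ 2 * D * t))) :
    ∀ t : ℝ, 0 ≤ t → ∫ x in (0 : ℝ)..L, ce (x, t) = L * cI := by
  intro t ht
  have hpi := Real.pi_pos
  set u : ℕ → ℝ := fun k => 1 / ((2 * (k : ℝ) + 1) ^ 2 * Real.pi ^ 2) with hu_def
  set f : ℕ → ℝ → ℝ := fun k x =>
    u k * Real.cos ((2 * (k : ℝ) + 1) * Real.pi * x / L) *
      Real.exp (-(((2 * (k : ℝ) + 1) * Real.pi / L) ^ 2 * D * t)) with hf_def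
  have hupos : ∀ k : ℕ, 0 < u k := by
    intro k
    apply one_div_pos.mpr
    positivity
  -- summability of the bound
  have hu : Summable u := by
    have h1 : Summable (fun k : ℕ => 1 / ((k : ℝ) + 1) ^ 2) := by
      have := (summable_nat_add_iff 1).mpr
        (Real.summable_one_div_nat_pow.mpr (by norm_num : 1 < 2))
      simpa using this
    have h2 : Summable (fun k : ℕ => (1 / Real.pi ^ 2) * (1 / ((k : ℝ) + 1) ^ 2)) :=
      h1.mul_left _
    refine h2.of_nonneg_of_le (fun k => (hupos k).le) ?_
    intro k
    have h3 : ((k : ℝ) + 1) ^ 2 ≤ (2 * (k : ℝ) + 1) ^ 2 := by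
      have : (0:ℝ) ≤ (k:ℝ) := Nat.cast_nonneg k
      nlinarith
    have h4 : (1 / Real.pi ^ 2) * (1 / ((k:ℝ) + 1) ^ 2) = 1 / (((k:ℝ) + 1) ^ 2 * Real.pi ^ 2) := by
      field_simp
    show (1 : ℝ) / ((2 * (k : ℝ) + 1) ^ 2 * Real.pi ^ 2) ≤ _
    rw [h4]
    apply one_div_le_one_div_of_le (by positivity)
    apply mul_le_mul_of_nonneg_right h3 (by positivity)
  -- pointwise bound
  have hbound : ∀ k x, ‖f k x‖ ≤ u k := by
    intro k x
    rw [hf_def]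
    simp only [norm_mul, Real.norm_eq_abs]
    have h1 : |Real.cos ((2 * (k : ℝ) + 1) * Real.pi * x / L)| ≤ 1 := Real.abs_cos_le_one _
    have h2 : |Real.exp (-(((2 * (k : ℝ) + 1) * Real.pi / L) ^ 2 * D * t))| ≤ 1 := by
      rw [abs_of_pos (Real.exp_pos _)]
      apply Real.exp_le_one_iff.mpr
      have : 0 ≤ ((2 * (k : ℝ) + 1) * Real.pi / L) ^ 2 * D * t := by positivity
      linarith
    calc |u k| * |Real.cos ((2 * (k : ℝ) + 1) * Real.pi * x / L)| *
          |Real.exp (-(((2 * (k : ℝ) + 1) * Real.pi / L) ^ 2 * D * t))|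
        ≤ |u k| * 1 * 1 := by
          apply mul_le_mul (mul_le_mul le_rfl h1 (abs_nonneg _) (abs_nonneg _)) h2
            (abs_nonneg _) (by positivity)
      _ = u k := by rw [mul_one, mul_one, abs_of_pos (hupos k)]
  have hfc : ∀ k, Continuous (f k) := by
    intro k; rw [hf_def]; fun_prop
  -- the sum function is continuous
  have hScont : Continuous (fun x => ∑' k, f k x) := continuous_tsum hfc hu hbound
  -- each term integrates to zero on [0, L]
  have hzero : ∀ k : ℕ, (∫ x in (0:ℝ)..L, f k x) = 0 := by
    intro k
    have hc : ((2 * (k : ℝ) + 1) * Real.pi / L) ≠ 0 := by positivity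
    have heq : ∀ x : ℝ, f k x =
        (u k * Real.exp (-(((2 * (k : ℝ) + 1) * Real.pi / L) ^ 2 * D * t))) *
          Real.cos (((2 * (k : ℝ) + 1) * Real.pi / L) * x) := by
      intro x; rw [hf_def]; ring_nf
    simp_rw [heq]
    rw [intervalIntegral.integral_const_mul,
      intervalIntegral.integral_comp_mul_left (fun y => Real.cos y) hc]
    have hL' : (2 * (k : ℝ) + 1) * Real.pi / L * L = (2 * (k : ℝ) + 1) * Real.pi := by
      field_simp
    rw [mul_zero, hL', integral_cos, Real.sin_zero]
    have : Real.sin ((2 * (k : ℝ) + 1) * Real.pi) = 0 := by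
      have : ((2 * k + 1 : ℕ) : ℝ) = 2 * (k : ℝ) + 1 := by push_cast; ring
      rw [← this, Real.sin_nat_mul_pi]
    rw [this]
    simp
  -- interchange sum and integral
  have hint : ∀ k : ℕ, IntegrableOn (f k) (Set.Ioc 0 L) volume :=
    fun k => (hfc k).integrableOn_Ioc
  have hnorm_sum : Summable (fun k => ∫ x in Set.Ioc 0 L, ‖f k x‖) := by
    have hb : Summable (fun k => L * u k) := hu.mul_left L
    refine hb.of_nonneg_of_le
      (fun k => integral_nonneg (fun x => norm_nonneg _)) ?_
    intro k
    calc (∫ x in Set.Ioc 0 L, ‖f k x‖)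
        ≤ ∫ _x in Set.Ioc 0 L, u k := by
          apply integral_mono_of_nonneg
          · exact Filter.Eventually.of_forall fun x => norm_nonneg _
          · exact integrableOn_const (by simp [Real.volume_Ioc])
          · exact Filter.Eventually.of_forall fun x => hbound k x
      _ = L * u k := by
          rw [setIntegral_const, Real.volume_real_Ioc_of_le hL.le, smul_eq_mul, sub_zero]
  have hswap : (∫ x in Set.Ioc 0 L, ∑' k, f k x) = ∑' k, ∫ x in Set.Ioc 0 L, f k x :=
    (integral_tsum_of_summable_integral_norm hint hnorm_sum).symm
  have hSzero : (∫ x in (0:ℝ)..L, ∑' k, f k x) = 0 := by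
    rw [intervalIntegral.integral_of_le hL.le, hswap]
    have : ∀ k : ℕ, (∫ x in Set.Ioc 0 L, f k x) = 0 := by
      intro k
      rw [← intervalIntegral.integral_of_le hL.le]
      exact hzero k
    simp [this]
  -- compute the affine part
  have haffine : (∫ x in (0:ℝ)..L, (cI + β * (L / 2 - x))) = L * cI := by
    have heq : ∀ x : ℝ, cI + β * (L / 2 - x) = (cI + β * L / 2) + (-β) * x := by
      intro x; ring
    simp_rw [heq]
    rw [intervalIntegral.integral_add (intervalIntegrable_const)
      ((intervalIntegral.intervalIntegrable_id).const_mul _),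
      intervalIntegral.integral_const, intervalIntegral.integral_const_mul,
      integral_id]
    rw [smul_eq_mul]; ring
  -- put everything together
  have hcongr : ∀ x : ℝ, ce (x, t) = (cI + β * (L / 2 - x)) - 4 * β * L * ∑' k, f k x := by
    intro x; rw [hce x t, hf_def]
  simp_rw [hcongr]
  have hi1 : IntervalIntegrable (fun x => cI + β * (L / 2 - x)) volume 0 L := by
    apply Continuous.intervalIntegrable; fun_prop
  have hi2 : IntervalIntegrable (fun x => 4 * β * L * ∑' k, f k x) volume 0 L :=
    (continuous_const.mul hScont).intervalIntegrable _ _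
  rw [intervalIntegral.integral_sub hi1 hi2, haffine,
    intervalIntegral.integral_const_mul, hSzero]
  ring
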